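/- Let A ∈ SL(2,ℤ) with tr A > 2, m ∈ {0, 1}, M = [[−1, m], [0, 1]] with M A M⁻¹ = A⁻¹, and k, k' ∈ ℤ² with (I − M)k = 0 and (A − M)(k' − k) = 0. Then the group Π₃(k,k') has the R_∞ property: for every automorphism φ of Π₃(k,k'), the number of φ-twisted conjugacy classes is infinite. -/

import Mathlib

/-- Two elements `x, y` of a group `G` are `φ`-twisted conjugate if
`y = g * x * (φ g)⁻¹` for some `g : G`. -/
def twistedConj {G : Type*} [Group G] (φ : G →* G) (x y : G) : Prop :=
  ∃ g : G, y = g * x * (φ g)⁻¹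

/-- The Reidemeister number of `φ` : the cardinality of the set of
`φ`-twisted conjugacy classes. -/
noncomputable def reidemeisterNumber {G : Type*} [Group G] (φ : G →* G) : Cardinal :=
  Cardinal.mk (Quot (twistedConj φ))

/-- Generators of the crystallographic group `Π₃(k,k')`. -/
inductive Gen3 | a1 | a2 | t | b

open FreeGroup in
/-- The relators in the presentation of `Π₃(k,k')`:
`[a₁,a₂] = 1`, `t aᵢ t⁻¹ = A(aᵢ)`, `β aᵢ β⁻¹ = M(aᵢ)`, `β² = aᵏ`,
`β t β⁻¹ = a^{k'} t⁻¹`. -/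
def relsPi3 (A M : Matrix (Fin 2) (Fin 2) ℤ) (k k' : Fin 2 → ℤ) : Set (FreeGroup Gen3) :=
  { of Gen3.a1 * of Gen3.a2 * (of Gen3.a2 * of Gen3.a1)⁻¹,
    of Gen3.t * of Gen3.a1 * (of Gen3.t)⁻¹ * (of Gen3.a1 ^ A 0 0 * of Gen3.a2 ^ A 1 0)⁻¹,
    of Gen3.t * of Gen3.a2 * (of Gen3.t)⁻¹ * (of Gen3.a1 ^ A 0 1 * of Gen3.a2 ^ A 1 1)⁻¹,
    of Gen3.b * of Gen3.a1 * (of Gen3.b)⁻¹ * (of Gen3.a1 ^ M 0 0 * of Gen3.a2 ^ M 1 0)⁻¹,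
    of Gen3.b * of Gen3.a2 * (of Gen3.b)⁻¹ * (of Gen3.a1 ^ M 0 1 * of Gen3.a2 ^ M 1 1)⁻¹,
    of Gen3.b * of Gen3.b * (of Gen3.a1 ^ k 0 * of Gen3.a2 ^ k 1)⁻¹,
    of Gen3.b * of Gen3.t * (of Gen3.b)⁻¹ *
      (of Gen3.a1 ^ k' 0 * of Gen3.a2 ^ k' 1 * (of Gen3.t)⁻¹)⁻¹ }

/-- The crystallographic group `Π₃(k,k')` of `Sol`. -/
abbrev Pi3 (A M : Matrix (Fin 2) (Fin 2) ℤ) (k k' : Fin 2 → ℤ) :=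
  PresentedGroup (relsPi3 A M k k')

namespace St12
open DihedralGroup
abbrev D := DihedralGroup 0

lemma sr_inv (i : ℤ) : ((sr i : D))⁻¹ = sr i := rfl
lemma r_inv (i : ℤ) : ((r i : D))⁻¹ = r (-i) := rfl
lemma r_zero : (r (0 : ℤ) : D) = 1 := rfl
lemma rr (i j : ℤ) : (r i : D) * r j = r (i + j) := rfl
lemma rs (i j : ℤ) : (r i : D) * sr j = sr (j - i) := rfl
lemma sr' (i j : ℤ) : (sr i : D) * r j = sr (i + j) := rfl
lemma ss (i j : ℤ) : (sr i : D) * sr j = r (j - i) := rfl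
lemma D_cases (d : D) : ∃ i : ℤ, d = r i ∨ d = sr i := by
  rcases d with i | i
  exacts [⟨i, Or.inl rfl⟩, ⟨i, Or.inr rfl⟩]
lemma r_inj {i j : ℤ} (h : (r i : D) = r j) : i = j := DihedralGroup.r.inj h
lemma sr_inj {i j : ℤ} (h : (sr i : D) = sr j) : i = j := DihedralGroup.sr.inj h
lemma sr_ne_one (i : ℤ) : (sr i : D) ≠ 1 := by rw [← r_zero]; intro h; cases h
lemma r_ne_sr (i j : ℤ) : (r i : D) ≠ sr j := by simp

lemma r_zpow (i : ℤ) (z : ℤ) : (r i : D) ^ z = r (z * i) := by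
  induction z using Int.induction_on with
  | zero => rw [zpow_zero, zero_mul, r_zero]
  | succ n ih => rw [zpow_add_one, ih, rr]; congr 1; show (_ : ℤ) = _; ring
  | pred n ih => rw [zpow_sub_one, ih, r_inv, rr]; congr 1; show (_ : ℤ) = _; ring

lemma sr_zpow (i : ℤ) (z : ℤ) : (sr i : D) ^ z = 1 ∨ (sr i : D) ^ z = sr i := by
  have h2 : (sr i : D) ^ (2:ℤ) = 1 := by
    rw [show (2:ℤ) = 1+1 from rfl, zpow_add, zpow_one, ss, sub_self, r_zero]
  have hz : (sr i : D) ^ z = ((sr i : D) ^ (2:ℤ)) ^ (z/2) * (sr i : D) ^ (z % 2) := by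
    rw [← zpow_mul, ← zpow_add]; congr 1; omega
  rcases Int.emod_two_eq z with h | h <;> rw [hz, h2, one_zpow, one_mul, h]
  · left; rw [zpow_zero]
  · right; simp

lemma comm_sr {v : ℤ} {d : D} (h : d * sr v = sr v * d) : d = 1 ∨ d = sr v := by
  obtain ⟨i, rfl | rfl⟩ := D_cases d
  · left; rw [rs, sr'] at h
    have h2 := sr_inj h
    have h3 : i = 0 := by omega
    rw [h3, r_zero]
  · right; rw [ss, ss] at h
    have h2 := r_inj h
    have h3 : i = v := by omega
    rw [h3]

lemma conj_sr (d : D) (v : ℤ) : ∃ u : ℤ, d * sr v * d⁻¹ = sr u := by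
  obtain ⟨i, rfl | rfl⟩ := D_cases d
  · exact ⟨v - i + -i, by rw [rs, r_inv, sr']⟩
  · exact ⟨i + i - v, by rw [ss, sr_inv, rs]; congr 1; show (_ : ℤ) = _; ring⟩

lemma eigen {A : Matrix (Fin 2) (Fin 2) ℤ} (hdet : A.det = 1) (htr : 2 < A.trace)
    (e z1 z2 : ℤ) (he : e = 1 ∨ e = -1)
    (h1 : A 0 0 * z1 + A 1 0 * z2 = e * z1)
    (h2 : A 0 1 * z1 + A 1 1 * z2 = e * z2) : z1 = 0 ∧ z2 = 0 := by
  have hd : A 0 0 * A 1 1 - A 0 1 * A 1 0 = 1 := by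
    rw [Matrix.det_fin_two] at hdet; linarith
  have ht : 2 < A 0 0 + A 1 1 := by
    rw [Matrix.trace_fin_two] at htr; linarith
  rcases he with rfl | rfl
  · have k1 : (2 - (A 0 0 + A 1 1)) * z1 = 0 := by linear_combination (A 1 1 - 1) * h1 - A 1 0 * h2 - z1 * hd
    have k2 : (2 - (A 0 0 + A 1 1)) * z2 = 0 := by linear_combination (A 0 0 - 1) * h2 - A 0 1 * h1 - z2 * hd
    constructor
    · rcases mul_eq_zero.mp k1 with h | h; · linarith
      exact h
    · rcases mul_eq_zero.mp k2 with h | h; · linarith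
      exact h
  · have k1 : (2 + (A 0 0 + A 1 1)) * z1 = 0 := by linear_combination (A 1 1 + 1) * h1 - A 1 0 * h2 - z1 * hd
    have k2 : (2 + (A 0 0 + A 1 1)) * z2 = 0 := by linear_combination (A 0 0 + 1) * h2 - A 0 1 * h1 - z2 * hd
    constructor
    · rcases mul_eq_zero.mp k1 with h | h; · linarith
      exact h
    · rcases mul_eq_zero.mp k2 with h | h; · linarith
      exact h

variable {A M : Matrix (Fin 2) (Fin 2) ℤ} {k k' : Fin 2 → ℤ}

lemma rel_one {w : FreeGroup Gen3} (hw : w ∈ relsPi3 A M k k') :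
    PresentedGroup.mk (relsPi3 A M k k') w = 1 :=
  (QuotientGroup.eq_one_iff w).mpr (Subgroup.subset_normalClosure hw)

/-- helper: a reflection value among the images of a1, a2 leads to contradiction -/
lemma refl_contra (F : Pi3 A M k k' →* D) (hs : Function.Surjective F)
    (v : ℤ) (w' : D)
    (hcomm : (sr v : D) * w' = w' * sr v)
    (hT : ∃ u1 u2 : ℤ, F (PresentedGroup.mk _ (FreeGroup.of Gen3.t)) * sr v *
      (F (PresentedGroup.mk _ (FreeGroup.of Gen3.t)))⁻¹ = (sr v : D) ^ u1 * w' ^ u2)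
    (hB : ∃ u1 u2 : ℤ, F (PresentedGroup.mk _ (FreeGroup.of Gen3.b)) * sr v *
      (F (PresentedGroup.mk _ (FreeGroup.of Gen3.b)))⁻¹ = (sr v : D) ^ u1 * w' ^ u2)
    (hxw : F (PresentedGroup.mk _ (FreeGroup.of Gen3.a1)) = sr v ∨
      F (PresentedGroup.mk _ (FreeGroup.of Gen3.a1)) = w')
    (hyw : F (PresentedGroup.mk _ (FreeGroup.of Gen3.a2)) = sr v ∨
      F (PresentedGroup.mk _ (FreeGroup.of Gen3.a2)) = w') : False := by
  have hw' : w' = 1 ∨ w' = sr v := comm_sr hcomm.symm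
  have hpow : ∀ u : ℤ, w' ^ u = 1 ∨ w' ^ u = sr v := by
    intro u
    rcases hw' with rfl | rfl
    · left; exact one_zpow u
    · exact sr_zpow v u
  have hS : ∀ u1 u2 : ℤ, (sr v : D) ^ u1 * w' ^ u2 = 1 ∨ (sr v : D) ^ u1 * w' ^ u2 = sr v := by
    intro u1 u2
    rcases sr_zpow v u1 with h | h <;> rcases hpow u2 with h' | h' <;>
      rw [h, h'] <;> simp [ss, sub_self, r_zero]
  have hconj : ∀ d : D, (∃ u1 u2 : ℤ, d * sr v * d⁻¹ = (sr v : D) ^ u1 * w' ^ u2) →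
      d * sr v = sr v * d := by
    rintro d ⟨u1, u2, hd⟩
    obtain ⟨u, hu⟩ := conj_sr d v
    rcases hS u1 u2 with h | h
    · rw [hd] at hu; rw [h] at hu; exact absurd hu.symm (sr_ne_one u)
    · rw [h] at hd
      have : d * sr v * d⁻¹ * d = sr v * d := by rw [hd]
      rwa [inv_mul_cancel_right] at this
  have hTc := hconj _ hT
  have hBc := hconj _ hB
  have hcomm' : ∀ d : D, (d = sr v ∨ d = w') → d * sr v = sr v * d := by
    rintro d (rfl | rfl)
    · rfl
    · exact hcomm.symm
  have hall : ∀ g, F g * sr v = sr v * F g := by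
    intro g
    have hmem := PresentedGroup.generated_by (relsPi3 A M k k')
      (Subgroup.comap F (Subgroup.centralizer {(sr v : D)})) ?_ g
    · have := Subgroup.mem_comap.mp hmem
      have := Subgroup.mem_centralizer_iff.mp this (sr v) rfl
      exact this.symm
    · intro j
      rw [Subgroup.mem_comap, Subgroup.mem_centralizer_iff]
      rintro h rfl
      cases j
      · exact (hcomm' _ hxw).symm
      · exact (hcomm' _ hyw).symm
      · exact hTc.symm
      · exact hBc.symm
  obtain ⟨g, hg⟩ := hs (sr ((v + 1 : ℤ)))
  have hcg := hall g
  rw [hg, ss, ss] at hcg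
  have := r_inj hcg
  omega

lemma kills (hdet : A.det = 1) (htr : 2 < A.trace)
    (F : Pi3 A M k k' →* D) (hs : Function.Surjective F) :
    F (.of .a1) = 1 ∧ F (.of .a2) = 1 := by
  have h1 := congrArg F (rel_one (show _ ∈ relsPi3 A M k k' by simp [relsPi3]) :
    PresentedGroup.mk _ (FreeGroup.of Gen3.a1 * FreeGroup.of Gen3.a2 *
      (FreeGroup.of Gen3.a2 * FreeGroup.of Gen3.a1)⁻¹) = 1)
  have h2 := congrArg F (rel_one (show _ ∈ relsPi3 A M k k' by simp [relsPi3]) :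
    PresentedGroup.mk _ (FreeGroup.of Gen3.t * FreeGroup.of Gen3.a1 * (FreeGroup.of Gen3.t)⁻¹ *
      (FreeGroup.of Gen3.a1 ^ A 0 0 * FreeGroup.of Gen3.a2 ^ A 1 0)⁻¹) = 1)
  have h3 := congrArg F (rel_one (show _ ∈ relsPi3 A M k k' by simp [relsPi3]) :
    PresentedGroup.mk _ (FreeGroup.of Gen3.t * FreeGroup.of Gen3.a2 * (FreeGroup.of Gen3.t)⁻¹ *
      (FreeGroup.of Gen3.a1 ^ A 0 1 * FreeGroup.of Gen3.a2 ^ A 1 1)⁻¹) = 1)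
  have h4 := congrArg F (rel_one (show _ ∈ relsPi3 A M k k' by simp [relsPi3]) :
    PresentedGroup.mk _ (FreeGroup.of Gen3.b * FreeGroup.of Gen3.a1 * (FreeGroup.of Gen3.b)⁻¹ *
      (FreeGroup.of Gen3.a1 ^ M 0 0 * FreeGroup.of Gen3.a2 ^ M 1 0)⁻¹) = 1)
  have h5 := congrArg F (rel_one (show _ ∈ relsPi3 A M k k' by simp [relsPi3]) :
    PresentedGroup.mk _ (FreeGroup.of Gen3.b * FreeGroup.of Gen3.a2 * (FreeGroup.of Gen3.b)⁻¹ *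
      (FreeGroup.of Gen3.a1 ^ M 0 1 * FreeGroup.of Gen3.a2 ^ M 1 1)⁻¹) = 1)
  simp only [map_mul, map_inv, map_zpow, map_one] at h1 h2 h3 h4 h5
  rw [mul_inv_eq_one] at h1 h2 h3 h4 h5
  show F (PresentedGroup.mk _ (FreeGroup.of Gen3.a1)) = 1 ∧
    F (PresentedGroup.mk _ (FreeGroup.of Gen3.a2)) = 1
  obtain ⟨z1, hx | hx⟩ := D_cases (F (PresentedGroup.mk (relsPi3 A M k k') (FreeGroup.of Gen3.a1)))
  case inr =>
    rw [hx] at h1 h2 h4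
    exact absurd (refl_contra F hs z1 _ h1 ⟨A 0 0, A 1 0, h2⟩ ⟨M 0 0, M 1 0, h4⟩
      (Or.inl hx) (Or.inr rfl)) not_false
  obtain ⟨z2, hy | hy⟩ := D_cases (F (PresentedGroup.mk (relsPi3 A M k k') (FreeGroup.of Gen3.a2)))
  case inr =>
    have hc : Commute (F (PresentedGroup.mk (relsPi3 A M k k') (FreeGroup.of Gen3.a1)))
      (F (PresentedGroup.mk (relsPi3 A M k k') (FreeGroup.of Gen3.a2))) := h1
    have h3' := h3.trans (hc.zpow_zpow (A 0 1) (A 1 1)).eq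
    have h5' := h5.trans (hc.zpow_zpow (M 0 1) (M 1 1)).eq
    rw [hy] at h1 h3' h5'
    exact absurd (refl_contra F hs z2 _ h1.symm ⟨A 1 1, A 0 1, h3'⟩ ⟨M 1 1, M 0 1, h5'⟩
      (Or.inr rfl) (Or.inl hy)) not_false
  rw [hx, hy] at h2 h3
  rw [r_zpow, r_zpow, rr] at h2 h3
  obtain ⟨u, hT | hT⟩ := D_cases (F (PresentedGroup.mk (relsPi3 A M k k') (FreeGroup.of Gen3.t)))
  · rw [hT, rr, r_inv, rr] at h2 h3
    have e2 : A 0 0 * z1 + A 1 0 * z2 = 1 * z1 := by have := r_inj h2; omega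
    have e3 : A 0 1 * z1 + A 1 1 * z2 = 1 * z2 := by have := r_inj h3; omega
    obtain ⟨hz1, hz2⟩ := eigen hdet htr 1 z1 z2 (Or.inl rfl) e2 e3
    rw [hx, hy, hz1, hz2]; exact ⟨r_zero, r_zero⟩
  · rw [hT, sr', sr_inv, ss] at h2 h3
    have e2 : A 0 0 * z1 + A 1 0 * z2 = (-1) * z1 := by have := r_inj h2; omega
    have e3 : A 0 1 * z1 + A 1 1 * z2 = (-1) * z2 := by have := r_inj h3; omega
    obtain ⟨hz1, hz2⟩ := eigen hdet htr (-1) z1 z2 (Or.inr rfl) e2 e3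
    rw [hx, hy, hz1, hz2]; exact ⟨r_zero, r_zero⟩

/-! ### the projection to the infinite dihedral group -/

def qf : Gen3 → D
  | Gen3.a1 => 1
  | Gen3.a2 => 1
  | Gen3.t => r 1
  | Gen3.b => sr 0

lemma qf_rels : ∀ w ∈ relsPi3 A M k k', FreeGroup.lift qf w = 1 := by
  intro w hw
  rcases hw with rfl | rfl | rfl | rfl | rfl | rfl | rfl <;>
    simp [qf, r_zero, sr_inv]

def q (A M : Matrix (Fin 2) (Fin 2) ℤ) (k k' : Fin 2 → ℤ) : Pi3 A M k k' →* D :=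
  PresentedGroup.toGroup qf_rels

lemma q_a1 : q A M k k' (PresentedGroup.of Gen3.a1) = 1 := PresentedGroup.toGroup.of _
lemma q_a2 : q A M k k' (PresentedGroup.of Gen3.a2) = 1 := PresentedGroup.toGroup.of _
lemma q_t : q A M k k' (PresentedGroup.of Gen3.t) = r (1 : ℤ) := PresentedGroup.toGroup.of _
lemma q_b : q A M k k' (PresentedGroup.of Gen3.b) = sr (0 : ℤ) := PresentedGroup.toGroup.of _

lemma q_surj : Function.Surjective (q A M k k') := by
  intro d
  obtain ⟨i, rfl | rfl⟩ := D_cases d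
  · refine ⟨PresentedGroup.of Gen3.t ^ i, ?_⟩
    rw [map_zpow, q_t, r_zpow, mul_one]
  · refine ⟨PresentedGroup.of Gen3.b * PresentedGroup.of Gen3.t ^ i, ?_⟩
    rw [map_mul, map_zpow, q_b, q_t, r_zpow, mul_one, sr', zero_add]

/-! ### the kernel of `q` is the normal closure of `a1, a2` -/

def Kn (A M : Matrix (Fin 2) (Fin 2) ℤ) (k k' : Fin 2 → ℤ) : Subgroup (Pi3 A M k k') :=
  Subgroup.normalClosure {PresentedGroup.of Gen3.a1, PresentedGroup.of Gen3.a2}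

instance : (Kn A M k k').Normal := Subgroup.normalClosure_normal

lemma a1_mem_Kn : PresentedGroup.of Gen3.a1 ∈ Kn A M k k' :=
  Subgroup.subset_normalClosure (Or.inl rfl)
lemma a2_mem_Kn : PresentedGroup.of Gen3.a2 ∈ Kn A M k k' :=
  Subgroup.subset_normalClosure (Or.inr rfl)

def tau (A M : Matrix (Fin 2) (Fin 2) ℤ) (k k' : Fin 2 → ℤ) : Pi3 A M k k' ⧸ Kn A M k k' :=
  QuotientGroup.mk' _ (PresentedGroup.of Gen3.t)

def bet (A M : Matrix (Fin 2) (Fin 2) ℤ) (k k' : Fin 2 → ℤ) : Pi3 A M k k' ⧸ Kn A M k k' :=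
  QuotientGroup.mk' _ (PresentedGroup.of Gen3.b)

lemma mkK_a1 : QuotientGroup.mk' (Kn A M k k') (PresentedGroup.of Gen3.a1) = 1 :=
  (QuotientGroup.eq_one_iff _).mpr a1_mem_Kn
lemma mkK_a2 : QuotientGroup.mk' (Kn A M k k') (PresentedGroup.of Gen3.a2) = 1 :=
  (QuotientGroup.eq_one_iff _).mpr a2_mem_Kn

lemma bet_sq : bet A M k k' * bet A M k k' = 1 := by
  have h := congrArg (QuotientGroup.mk' (Kn A M k k'))
    (rel_one (show _ ∈ relsPi3 A M k k' by simp [relsPi3]) :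
    PresentedGroup.mk _ (FreeGroup.of Gen3.b * FreeGroup.of Gen3.b *
      (FreeGroup.of Gen3.a1 ^ k 0 * FreeGroup.of Gen3.a2 ^ k 1)⁻¹) = 1)
  simp only [map_mul, map_inv, map_zpow, map_one] at h
  rw [mul_inv_eq_one] at h
  rw [show QuotientGroup.mk' (Kn A M k k')
      (PresentedGroup.mk (relsPi3 A M k k') (FreeGroup.of Gen3.a1)) = 1 from mkK_a1,
    show QuotientGroup.mk' (Kn A M k k')
      (PresentedGroup.mk (relsPi3 A M k k') (FreeGroup.of Gen3.a2)) = 1 from mkK_a2] at h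
  simp only [one_zpow, mul_one, one_mul] at h; exact h

lemma bet_tau : bet A M k k' * tau A M k k' * (bet A M k k')⁻¹ = (tau A M k k')⁻¹ := by
  have h := congrArg (QuotientGroup.mk' (Kn A M k k'))
    (rel_one (show _ ∈ relsPi3 A M k k' by simp [relsPi3]) :
    PresentedGroup.mk _ (FreeGroup.of Gen3.b * FreeGroup.of Gen3.t * (FreeGroup.of Gen3.b)⁻¹ *
      (FreeGroup.of Gen3.a1 ^ k' 0 * FreeGroup.of Gen3.a2 ^ k' 1 *
        (FreeGroup.of Gen3.t)⁻¹)⁻¹) = 1)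
  simp only [map_mul, map_inv, map_zpow, map_one] at h
  rw [mul_inv_eq_one] at h
  rw [show QuotientGroup.mk' (Kn A M k k')
      (PresentedGroup.mk (relsPi3 A M k k') (FreeGroup.of Gen3.a1)) = 1 from mkK_a1,
    show QuotientGroup.mk' (Kn A M k k')
      (PresentedGroup.mk (relsPi3 A M k k') (FreeGroup.of Gen3.a2)) = 1 from mkK_a2] at h
  simp only [one_zpow, mul_one, one_mul] at h; exact h

lemma bet_inv : (bet A M k k')⁻¹ = bet A M k k' :=
  inv_eq_of_mul_eq_one_right bet_sq

lemma bet_tau_zpow (z : ℤ) :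
    bet A M k k' * tau A M k k' ^ z = tau A M k k' ^ (-z) * bet A M k k' := by
  have h : bet A M k k' * tau A M k k' ^ z * (bet A M k k')⁻¹ = tau A M k k' ^ (-z) := by
    have := map_zpow (MulAut.conj (bet A M k k')) (tau A M k k') z
    simp only [MulAut.conj_apply] at this
    rw [this, bet_tau, inv_zpow, zpow_neg]
  calc bet A M k k' * tau A M k k' ^ z
      = bet A M k k' * tau A M k k' ^ z * (bet A M k k')⁻¹ * bet A M k k' := by group
    _ = tau A M k k' ^ (-z) * bet A M k k' := by rw [h]

/-- identity embedding of `ZMod 0` into `ℤ` -/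
def iz : ZMod 0 → ℤ := fun i => i

lemma iz_int (i : ℤ) : iz i = i := rfl

def sfun : D → Pi3 A M k k' ⧸ Kn A M k k'
  | r i => tau A M k k' ^ iz i
  | sr i => tau A M k k' ^ (-(iz i)) * bet A M k k'

lemma sfun_mul (d e : D) :
    sfun (A := A) (M := M) (k := k) (k' := k') (d * e) = sfun d * sfun e := by
  obtain ⟨i, rfl | rfl⟩ := D_cases d <;> obtain ⟨j, rfl | rfl⟩ := D_cases e
  · rw [rr]
    show tau A M k k' ^ (i + j) = tau A M k k' ^ i * tau A M k k' ^ j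
    rw [zpow_add]
  · rw [rs]
    show tau A M k k' ^ (-(j - i)) * bet A M k k' =
      tau A M k k' ^ i * (tau A M k k' ^ (-j) * bet A M k k')
    rw [← mul_assoc, ← zpow_add]; ring_nf
  · rw [sr']
    show tau A M k k' ^ (-(i + j)) * bet A M k k' =
      tau A M k k' ^ (-i) * bet A M k k' * tau A M k k' ^ j
    rw [mul_assoc, bet_tau_zpow, ← mul_assoc, ← zpow_add]; ring_nf
  · rw [ss]
    show tau A M k k' ^ (j - i) =
      tau A M k k' ^ (-i) * bet A M k k' * (tau A M k k' ^ (-j) * bet A M k k')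
    rw [mul_assoc, ← mul_assoc (bet A M k k'), bet_tau_zpow, neg_neg,
      mul_assoc (tau A M k k' ^ j), bet_sq, mul_one, ← zpow_add]; ring_nf

def sHom (A M : Matrix (Fin 2) (Fin 2) ℤ) (k k' : Fin 2 → ℤ) :
    D →* Pi3 A M k k' ⧸ Kn A M k k' :=
  MonoidHom.mk' sfun sfun_mul

lemma sHom_q : (sHom A M k k').comp (q A M k k') = QuotientGroup.mk' (Kn A M k k') := by
  apply PresentedGroup.ext
  intro x
  cases x
  · rw [MonoidHom.comp_apply, q_a1, map_one]; exact mkK_a1.symm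
  · rw [MonoidHom.comp_apply, q_a2, map_one]; exact mkK_a2.symm
  · rw [MonoidHom.comp_apply, q_t]
    show tau A M k k' ^ (1 : ℤ) = _
    rw [zpow_one]; rfl
  · rw [MonoidHom.comp_apply, q_b]
    show tau A M k k' ^ (-(0:ℤ)) * bet A M k k' = _
    rw [neg_zero, zpow_zero, one_mul]; rfl

lemma ker_q_le_Kn {g : Pi3 A M k k'} (hg : q A M k k' g = 1) : g ∈ Kn A M k k' := by
  have h := DFunLike.congr_fun (sHom_q (A := A) (M := M) (k := k) (k' := k')) g
  simp only [MonoidHom.comp_apply] at h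
  rw [hg, map_one] at h
  exact (QuotientGroup.eq_one_iff g).mp h.symm

/-! ### subgroups of D used for the classification -/

def TrS : Subgroup D where
  carrier := {d | ∃ i : ℤ, d = r i}
  one_mem' := ⟨0, r_zero.symm⟩
  mul_mem' := by rintro a b ⟨i, rfl⟩ ⟨j, rfl⟩; exact ⟨i + j, rr i j⟩
  inv_mem' := by rintro a ⟨i, rfl⟩; exact ⟨-i, r_inv i⟩

def twoS (v : ℤ) : Subgroup D where
  carrier := {d | d = 1 ∨ d = sr v}
  one_mem' := Or.inl rfl
  mul_mem' := by
    rintro a b (rfl | rfl) (rfl | rfl)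
    · exact Or.inl (one_mul 1)
    · exact Or.inr (one_mul _)
    · exact Or.inr (mul_one _)
    · exact Or.inl (by rw [ss, sub_self, r_zero])
  inv_mem' := by
    rintro a (rfl | rfl)
    · exact Or.inl inv_one
    · exact Or.inr (sr_inv v)

def genS (u w : ℤ) : Subgroup D where
  carrier := {d | (∃ j : ℤ, d = r (j * u)) ∨ (∃ j : ℤ, d = sr (w + j * u))}
  one_mem' := Or.inl ⟨0, by rw [zero_mul, r_zero]⟩
  mul_mem' := by
    rintro a b (⟨i, rfl⟩ | ⟨i, rfl⟩) (⟨j, rfl⟩ | ⟨j, rfl⟩)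
    · exact Or.inl ⟨i + j, by rw [rr]; congr 1; show (_ : ℤ) = _; ring⟩
    · exact Or.inr ⟨j - i, by rw [rs]; congr 1; show (_ : ℤ) = _; ring⟩
    · exact Or.inr ⟨i + j, by rw [sr']; congr 1; show (_ : ℤ) = _; ring⟩
    · exact Or.inl ⟨j - i, by rw [ss]; congr 1; show (_ : ℤ) = _; ring⟩
  inv_mem' := by
    rintro a (⟨i, rfl⟩ | ⟨i, rfl⟩)
    · exact Or.inl ⟨-i, by rw [r_inv]; congr 1; show (_ : ℤ) = _; ring⟩
    · exact Or.inr ⟨i, sr_inv _⟩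

variable {A M : Matrix (Fin 2) (Fin 2) ℤ} {k k' : Fin 2 → ℤ} in
lemma mem_of_gens (F : Pi3 A M k k' →* D) (S : Subgroup D)
    (ha1 : F (PresentedGroup.mk _ (FreeGroup.of Gen3.a1)) = 1)
    (ha2 : F (PresentedGroup.mk _ (FreeGroup.of Gen3.a2)) = 1)
    (hT : F (PresentedGroup.mk _ (FreeGroup.of Gen3.t)) ∈ S)
    (hB : F (PresentedGroup.mk _ (FreeGroup.of Gen3.b)) ∈ S)
    (g : Pi3 A M k k') : F g ∈ S := by
  have hmem := PresentedGroup.generated_by (relsPi3 A M k k') (Subgroup.comap F S) ?_ g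
  · exact Subgroup.mem_comap.mp hmem
  · intro j
    rw [Subgroup.mem_comap]
    cases j
    · rw [show F (PresentedGroup.of Gen3.a1) = 1 from ha1]; exact S.one_mem
    · rw [show F (PresentedGroup.of Gen3.a2) = 1 from ha2]; exact S.one_mem
    · exact hT
    · exact hB

variable {A M : Matrix (Fin 2) (Fin 2) ℤ} {k k' : Fin 2 → ℤ} in
lemma classify (F : Pi3 A M k k' →* D) (hs : Function.Surjective F)
    (ha1 : F (PresentedGroup.mk _ (FreeGroup.of Gen3.a1)) = 1)
    (ha2 : F (PresentedGroup.mk _ (FreeGroup.of Gen3.a2)) = 1) :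
    ∃ u w : ℤ, (u = 1 ∨ u = -1) ∧
      F (PresentedGroup.mk _ (FreeGroup.of Gen3.t)) = r u ∧
      F (PresentedGroup.mk _ (FreeGroup.of Gen3.b)) = sr w := by
  have h6 := congrArg F (rel_one (show _ ∈ relsPi3 A M k k' by simp [relsPi3]) :
    PresentedGroup.mk _ (FreeGroup.of Gen3.b * FreeGroup.of Gen3.b *
      (FreeGroup.of Gen3.a1 ^ k 0 * FreeGroup.of Gen3.a2 ^ k 1)⁻¹) = 1)
  have h7 := congrArg F (rel_one (show _ ∈ relsPi3 A M k k' by simp [relsPi3]) :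
    PresentedGroup.mk _ (FreeGroup.of Gen3.b * FreeGroup.of Gen3.t * (FreeGroup.of Gen3.b)⁻¹ *
      (FreeGroup.of Gen3.a1 ^ k' 0 * FreeGroup.of Gen3.a2 ^ k' 1 *
        (FreeGroup.of Gen3.t)⁻¹)⁻¹) = 1)
  simp only [map_mul, map_inv, map_zpow, map_one] at h6 h7
  rw [mul_inv_eq_one] at h6 h7
  rw [ha1, ha2] at h6 h7
  simp only [one_zpow, one_mul, mul_one] at h6 h7
  -- h6 : B * B = 1 ; h7 : B * T * B⁻¹ = T⁻¹
  obtain ⟨u0, hX | hX⟩ := D_cases (F (PresentedGroup.mk (relsPi3 A M k k') (FreeGroup.of Gen3.t)))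
    <;> obtain ⟨w0, hY | hY⟩ :=
      D_cases (F (PresentedGroup.mk (relsPi3 A M k k') (FreeGroup.of Gen3.b)))
  · -- X = r u0, Y = r w0 : Y = 1, image is in TrS, contradiction with surjectivity
    exfalso
    rw [hY, rr] at h6
    obtain ⟨g, hg⟩ := hs (sr 0)
    have hmem := mem_of_gens F TrS ha1 ha2 (hX ▸ ⟨u0, rfl⟩) (hY ▸ ⟨w0, rfl⟩) g
    rw [hg] at hmem
    obtain ⟨i, hi⟩ := hmem
    exact r_ne_sr i 0 hi.symm
  · -- X = r u0, Y = sr w0 : the main case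
    refine ⟨u0, w0, ?_, hX, hY⟩
    obtain ⟨g, hg⟩ := hs (r 1)
    have hmem := mem_of_gens F (genS u0 w0) ha1 ha2
      (hX ▸ Or.inl ⟨1, by rw [one_mul]⟩) (hY ▸ Or.inr ⟨0, by rw [zero_mul, add_zero]⟩) g
    rw [hg] at hmem
    rcases hmem with ⟨j, hj⟩ | ⟨j, hj⟩
    · have h1 : j * u0 = 1 := (r_inj hj).symm
      exact Int.isUnit_iff.mp (IsUnit.of_mul_eq_one (a := u0) j (by rw [mul_comm]; exact h1))
    · exact absurd hj (r_ne_sr 1 _)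
  · -- X = sr u0, Y = r w0 : Y = 1, image is in twoS u0, contradiction
    exfalso
    rw [hY, rr] at h6
    have hw0 : w0 = 0 := by
      have := r_inj (h6.trans r_zero.symm); omega
    rw [hw0, r_zero] at hY
    obtain ⟨g, hg⟩ := hs (r 1)
    have hmem := mem_of_gens F (twoS u0) ha1 ha2 (hX ▸ Or.inr rfl) (hY ▸ Or.inl rfl) g
    rw [hg] at hmem
    rcases hmem with h | h
    · rw [← r_zero] at h; have := r_inj h; omega
    · exact r_ne_sr 1 u0 h
  · -- X = sr u0, Y = sr w0 : u0 = w0, image is in twoS u0, contradiction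
    exfalso
    rw [hX, hY, sr_inv, ss, rs, sr_inv] at h7
    have hu0 : u0 = w0 := by have := sr_inj h7; omega
    obtain ⟨g, hg⟩ := hs (r 1)
    have hmem := mem_of_gens F (twoS u0) ha1 ha2 (hX ▸ Or.inr rfl)
      (hY ▸ Or.inr (by rw [hu0])) g
    rw [hg] at hmem
    rcases hmem with h | h
    · rw [← r_zero] at h; have := r_inj h; omega
    · exact r_ne_sr 1 u0 h

/-! ### the induced endomorphism of D and twisted-conjugacy invariants -/

def alfFun (e w : ℤ) : D → D
  | r i => r (e * iz i)
  | sr i => sr (w + e * iz i)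

def alf (e w : ℤ) : D →* D :=
  MonoidHom.mk' (alfFun e w) (by
    intro d d'
    obtain ⟨i, rfl | rfl⟩ := D_cases d <;> obtain ⟨j, rfl | rfl⟩ := D_cases d'
    · rw [rr]
      show (r (e * (i + j)) : D) = (r (e * i) : D) * (r (e * j) : D)
      rw [rr]; congr 1; show (_ : ℤ) = _; ring
    · rw [rs]
      show (sr (w + e * (j - i)) : D) = (r (e * i) : D) * (sr (w + e * j) : D)
      rw [rs]; congr 1; show (_ : ℤ) = _; ring
    · rw [sr']
      show (sr (w + e * (i + j)) : D) = (sr (w + e * i) : D) * (r (e * j) : D)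
      rw [sr']; congr 1; show (_ : ℤ) = _; ring
    · rw [ss]
      show (r (e * (j - i)) : D) = (sr (w + e * i) : D) * (sr (w + e * j) : D)
      rw [ss]; congr 1; show (_ : ℤ) = _; ring)

lemma alf_r (e w i : ℤ) : alf e w (r i) = r (e * i) := rfl
lemma alf_sr (e w i : ℤ) : alf e w (sr i) = sr (w + e * i) := rfl

variable {A M : Matrix (Fin 2) (Fin 2) ℤ} {k k' : Fin 2 → ℤ} in
lemma F_eq_alf (F : Pi3 A M k k' →* D) (u w : ℤ)
    (ha1 : F (PresentedGroup.mk _ (FreeGroup.of Gen3.a1)) = 1)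
    (ha2 : F (PresentedGroup.mk _ (FreeGroup.of Gen3.a2)) = 1)
    (hX : F (PresentedGroup.mk _ (FreeGroup.of Gen3.t)) = r u)
    (hY : F (PresentedGroup.mk _ (FreeGroup.of Gen3.b)) = sr w) :
    F = (alf u w).comp (q A M k k') := by
  apply PresentedGroup.ext
  intro x
  rw [MonoidHom.comp_apply]
  cases x
  · rw [q_a1, map_one]; exact ha1
  · rw [q_a2, map_one]; exact ha2
  · rw [q_t, alf_r, mul_one]; exact hX
  · rw [q_b, alf_sr, mul_zero, add_zero]; exact hY

def J1 (w : ℤ) : D → ℤ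
  | r i => (2 * iz i - w) ^ 2
  | sr _ => -1

def J2 (w : ℤ) : D → ℤ
  | r _ => -1
  | sr i => (2 * iz i - w) ^ 2

lemma J1_r (w i : ℤ) : J1 w (r i) = (2 * i - w) ^ 2 := rfl
lemma J1_sr (w i : ℤ) : J1 w (sr i) = -1 := rfl
lemma J2_r (w i : ℤ) : J2 w (r i) = -1 := rfl
lemma J2_sr (w i : ℤ) : J2 w (sr i) = (2 * i - w) ^ 2 := rfl

lemma J1_inv (w : ℤ) (d x : D) : J1 w (d * x * (alf 1 w d)⁻¹) = J1 w x := by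
  obtain ⟨p, rfl | rfl⟩ := D_cases d <;> obtain ⟨n, rfl | rfl⟩ := D_cases x
  · rw [alf_r, rr, r_inv, rr, J1_r, J1_r]; ring_nf
  · rw [alf_r, rs, r_inv, sr', J1_sr, J1_sr]
  · rw [alf_sr, sr', sr_inv, ss, J1_r, J1_r]; ring_nf
  · rw [alf_sr, ss, sr_inv, rs, J1_sr, J1_sr]

lemma J2_inv (w : ℤ) (d x : D) : J2 w (d * x * (alf (-1) w d)⁻¹) = J2 w x := by
  obtain ⟨p, rfl | rfl⟩ := D_cases d <;> obtain ⟨n, rfl | rfl⟩ := D_cases x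
  · rw [alf_r, rr, r_inv, rr, J2_r, J2_r]
  · rw [alf_r, rs, r_inv, sr', J2_sr, J2_sr]; ring_nf
  · rw [alf_sr, sr', sr_inv, ss, J2_r, J2_r]
  · rw [alf_sr, ss, sr_inv, rs, J2_sr, J2_sr]; ring_nf

end St12

open St12 in
theorem stmt12_aux (A M : Matrix (Fin 2) (Fin 2) ℤ) (k k' : Fin 2 → ℤ)
    (hdet : A.det = 1) (htr : 2 < A.trace) :
    ∀ φ : Pi3 A M k k' ≃* Pi3 A M k k',
      Cardinal.aleph0 ≤ reidemeisterNumber φ.toMonoidHom := by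
  intro φ
  set F : Pi3 A M k k' →* D := (q A M k k').comp φ.toMonoidHom with hF
  have hFs : Function.Surjective F := by
    rw [hF]
    simpa [MonoidHom.coe_comp] using Function.Surjective.comp q_surj φ.surjective
  obtain ⟨ha1, ha2⟩ := kills hdet htr F hFs
  obtain ⟨u, w, hu, hX, hY⟩ := classify F hFs ha1 ha2
  have hFeq : F = (alf u w).comp (q A M k k') := F_eq_alf F u w ha1 ha2 hX hY
  have hptw : ∀ g : Pi3 A M k k', q A M k k' (φ g) = alf u w (q A M k k' g) := by
    intro g
    have := DFunLike.congr_fun hFeq g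
    simpa [hF] using this
  set c : ℤ := (w.natAbs : ℤ) + 1 with hc
  have hwc : w ≤ (w.natAbs : ℤ) := Int.le_natAbs
  rcases hu with rfl | rfl
  · -- u = 1
    set J : Pi3 A M k k' → ℤ := fun g => J1 w (q A M k k' g) with hJ
    have hJc : ∀ a b : Pi3 A M k k', twistedConj φ.toMonoidHom a b → J a = J b := by
      rintro a b ⟨g, rfl⟩
      show J1 w (q A M k k' a) = J1 w (q A M k k' (g * a * (φ g)⁻¹))
      rw [map_mul, map_mul, map_inv, hptw g]
      exact (J1_inv w _ _).symm
    set xf : ℕ → Pi3 A M k k' := fun i => PresentedGroup.of Gen3.t ^ (c + (i : ℤ)) with hxf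
    have hJx : ∀ i : ℕ, J (xf i) = (2 * (c + (i : ℤ)) - w) ^ 2 := by
      intro i
      show J1 w (q A M k k' (PresentedGroup.of Gen3.t ^ (c + (i : ℤ)))) = _
      rw [map_zpow, q_t, r_zpow, mul_one, J1_r]
    have hinj : Function.Injective
        (fun i : ℕ => Quot.mk (twistedConj φ.toMonoidHom) (xf i)) := by
      intro i j hij
      have h1 : J (xf i) = J (xf j) :=
        congrArg (Quot.lift J (fun a b hab => hJc a b hab)) hij
      rw [hJx i, hJx j] at h1
      have hci : 0 < 2 * (c + (i : ℤ)) - w := by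
        have : (0:ℤ) ≤ i := Int.natCast_nonneg i
        omega
      have hcj : 0 < 2 * (c + (j : ℤ)) - w := by
        have : (0:ℤ) ≤ j := Int.natCast_nonneg j
        omega
      have hfac : (2 * (c + (i : ℤ)) - w - (2 * (c + (j : ℤ)) - w)) *
          (2 * (c + (i : ℤ)) - w + (2 * (c + (j : ℤ)) - w)) = 0 := by
        linear_combination h1
      rcases mul_eq_zero.mp hfac with h | h
      · have : (i : ℤ) = j := by omega
        exact_mod_cast this
      · omega
    haveI : Infinite (Quot (twistedConj φ.toMonoidHom)) := Infinite.of_injective _ hinj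
    show Cardinal.aleph0 ≤ Cardinal.mk (Quot (twistedConj φ.toMonoidHom))
    exact Cardinal.aleph0_le_mk _
  · -- u = -1
    set J : Pi3 A M k k' → ℤ := fun g => J2 w (q A M k k' g) with hJ
    have hJc : ∀ a b : Pi3 A M k k', twistedConj φ.toMonoidHom a b → J a = J b := by
      rintro a b ⟨g, rfl⟩
      show J2 w (q A M k k' a) = J2 w (q A M k k' (g * a * (φ g)⁻¹))
      rw [map_mul, map_mul, map_inv, hptw g]
      exact (J2_inv w _ _).symm
    set xf : ℕ → Pi3 A M k k' := fun i =>
      PresentedGroup.of Gen3.b * PresentedGroup.of Gen3.t ^ (c + (i : ℤ)) with hxf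
    have hJx : ∀ i : ℕ, J (xf i) = (2 * (c + (i : ℤ)) - w) ^ 2 := by
      intro i
      show J2 w (q A M k k' (PresentedGroup.of Gen3.b *
        PresentedGroup.of Gen3.t ^ (c + (i : ℤ)))) = _
      rw [map_mul, map_zpow, q_b, q_t, r_zpow, mul_one, sr', zero_add, J2_sr]
    have hinj : Function.Injective
        (fun i : ℕ => Quot.mk (twistedConj φ.toMonoidHom) (xf i)) := by
      intro i j hij
      have h1 : J (xf i) = J (xf j) :=
        congrArg (Quot.lift J (fun a b hab => hJc a b hab)) hij
      rw [hJx i, hJx j] at h1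
      have hci : 0 < 2 * (c + (i : ℤ)) - w := by
        have : (0:ℤ) ≤ i := Int.natCast_nonneg i
        omega
      have hcj : 0 < 2 * (c + (j : ℤ)) - w := by
        have : (0:ℤ) ≤ j := Int.natCast_nonneg j
        omega
      have hfac : (2 * (c + (i : ℤ)) - w - (2 * (c + (j : ℤ)) - w)) *
          (2 * (c + (i : ℤ)) - w + (2 * (c + (j : ℤ)) - w)) = 0 := by
        linear_combination h1
      rcases mul_eq_zero.mp hfac with h | h
      · have : (i : ℤ) = j := by omega
        exact_mod_cast this
      · omega
    haveI : Infinite (Quot (twistedConj φ.toMonoidHom)) := Infinite.of_injective _ hinj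
    show Cardinal.aleph0 ≤ Cardinal.mk (Quot (twistedConj φ.toMonoidHom))
    exact Cardinal.aleph0_le_mk _

/-- the group `Π₃(k,k')` has the `R∞` property. -/
theorem stmt12 (A : Matrix (Fin 2) (Fin 2) ℤ) (hdet : A.det = 1) (htr : 2 < A.trace)
    (m : ℤ) (hm : m = 0 ∨ m = 1)
    (hMA : !![(-1 : ℤ), m; 0, 1] * A * (!![(-1 : ℤ), m; 0, 1])⁻¹ = A⁻¹)
    (k k' : Fin 2 → ℤ)
    (hk : (1 - !![(-1 : ℤ), m; 0, 1]).mulVec k = 0)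
    (hk' : (A - !![(-1 : ℤ), m; 0, 1]).mulVec (k' - k) = 0) :
    ∀ φ : Pi3 A !![(-1 : ℤ), m; 0, 1] k k' ≃* Pi3 A !![(-1 : ℤ), m; 0, 1] k k',
      Cardinal.aleph0 ≤ reidemeisterNumber φ.toMonoidHom :=
  stmt12_aux A !![(-1 : ℤ), m; 0, 1] k k' hdet htr
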